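/- Let $q$ be a power of an odd prime $p$, $n \geq 2$, and let $\mathcal{P}$ be the $n \times n$ cyclic permutation matrix over $\mathbb{F}_q$ (with $\mathcal{P}_{j,j+1} = 1$ indices mod $n$). Set $M_{n,1} = \mathcal{P}^T - 2\,\mathrm{Id} + \mathcal{P}$. Then the rank of $M_{n,1}$ equals $n-1$ if $p \nmid n$, and equals $n-2$ if $p \mid n$. -/

import Mathlib

open Matrix

theorem stmt_6 (p s n q : ℕ) (hp : p.Prime) (hodd : p ≠ 2) (hs : 0 < s)
    (hq : q = p ^ s) (hn : 2 ≤ n) [NeZero n]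
    (Fq : Type*) [Field Fq] [Fintype Fq] (hcardq : Fintype.card Fq = q)
    (P : Matrix (ZMod n) (ZMod n) Fq)
    (hP : ∀ i j : ZMod n, P i j = if j = i + 1 then 1 else 0) :
    (P.transpose - 2 + P).rank = if p ∣ n then n - 2 else n - 1 := by
  classical
  -- characteristic
  haveI hchar : CharP Fq p := by
    have hch : CharP Fq (ringChar Fq) := ringChar.charP Fq
    obtain ⟨m, hr, hcard⟩ := FiniteField.card Fq (ringChar Fq)
    have hpr : p = ringChar Fq := by
      have h1 : p ∣ (ringChar Fq) ^ (m : ℕ) := by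
        rw [← hcard, hcardq, hq]; exact dvd_pow_self p (by omega)
      exact (Nat.prime_dvd_prime_iff_eq hp hr).mp (hp.dvd_of_dvd_pow h1)
    rwa [hpr]
  -- Pᵀ * P = 1
  have hPTP : P.transpose * P = 1 := by
    ext i j
    simp only [Matrix.mul_apply, Matrix.transpose_apply, hP, Matrix.one_apply]
    rw [Finset.sum_eq_single (i - 1)]
    · simp [sub_add_cancel, eq_comm, sub_eq_iff_eq_add]
    · intro k _ hk
      rw [if_neg, zero_mul]
      intro h; exact hk (by rw [h]; ring)
    · simp
  set A : Matrix (ZMod n) (ZMod n) Fq := (P - 1) * (P - 1) with hA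
  -- M = Pᵀ * A
  have hM : P.transpose - 2 + P = P.transpose * A := by
    have h2 : P.transpose * (P * P) = P := by rw [← mul_assoc, hPTP, one_mul]
    have hexp : P.transpose * A =
        P.transpose * (P * P) - P.transpose * P - P.transpose * P + P.transpose := by
      rw [hA]; noncomm_ring
    rw [hexp, h2, hPTP]
    have h1 : (2 : Matrix (ZMod n) (ZMod n) Fq) = 1 + 1 := by norm_num
    rw [h1]; abel
  have hrank : (P.transpose - 2 + P).rank = A.rank := by
    rw [hM]
    exact Matrix.rank_mul_eq_right_of_isUnit_det _ _
      (Matrix.isUnit_det_of_right_inverse hPTP)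
  -- mulVec computations
  have hPmv : ∀ (v : ZMod n → Fq) (i : ZMod n), (P *ᵥ v) i = v (i + 1) := by
    intro v i
    simp only [Matrix.mulVec, dotProduct, hP]
    rw [Finset.sum_eq_single (i + 1)] <;> simp +contextual
  have hfv : ∀ (v : ZMod n → Fq) (i : ZMod n), ((P - 1) *ᵥ v) i = v (i + 1) - v i := by
    intro v i
    rw [Matrix.sub_mulVec, Matrix.one_mulVec, Pi.sub_apply, hPmv]
  -- constancy lemma
  have hconst : ∀ (v : ZMod n → Fq), (∀ i, v (i + 1) = v i) → ∀ i, v i = v 0 := by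
    intro v hv
    have key : ∀ k : ℕ, v (k : ZMod n) = v 0 := by
      intro k
      induction k with
      | zero => simp
      | succ k ih => push_cast; rw [hv, ih]
    intro i
    have := key i.val
    simpa [ZMod.natCast_val, ZMod.cast_id] using this
  -- telescoping sum
  have htel : ∀ v : ZMod n → Fq, ∑ i, (v (i + 1) - v i) = 0 := by
    intro v
    rw [Finset.sum_sub_distrib, sub_eq_zero]
    exact Fintype.sum_equiv (Equiv.addRight (1 : ZMod n)) _ _ (fun i => rfl)
  -- kernel membership characterization
  have hkerA : ∀ v : ZMod n → Fq,
      v ∈ LinearMap.ker A.mulVecLin ↔ (P - 1) *ᵥ ((P - 1) *ᵥ v) = 0 := by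
    intro v
    rw [hA, LinearMap.mem_ker, Matrix.mulVecLin_mul]
    simp only [LinearMap.coe_comp, Function.comp_apply, Matrix.mulVecLin_apply]
  -- if v in ker A, then f v is constant c with n * c = 0
  have hker_const : ∀ v : ZMod n → Fq, v ∈ LinearMap.ker A.mulVecLin →
      (∀ i, ((P - 1) *ᵥ v) i = ((P - 1) *ᵥ v) 0) ∧
        (n : Fq) * ((P - 1) *ᵥ v) 0 = 0 := by
    intro v hv
    rw [hkerA] at hv
    set w := (P - 1) *ᵥ v with hw
    have hwc : ∀ i, w (i + 1) = w i := by
      intro i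
      have := congr_fun hv i
      rw [hfv] at this
      simp only [Pi.zero_apply] at this
      exact sub_eq_zero.mp this
    have h1 : ∀ i, w i = w 0 := hconst w hwc
    refine ⟨h1, ?_⟩
    have hsum : ∑ i : ZMod n, w i = 0 := by
      rw [hw]
      calc ∑ i : ZMod n, ((P - 1) *ᵥ v) i
          = ∑ i : ZMod n, (v (i + 1) - v i) := by
            exact Finset.sum_congr rfl (fun i _ => hfv v i)
        _ = 0 := htel v
    have : ∑ i : ZMod n, w i = (n : Fq) * w 0 := by
      rw [Finset.sum_congr rfl (fun i _ => h1 i)]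
      simp [Finset.sum_const, ZMod.card, nsmul_eq_mul]
    rw [this] at hsum
    exact hsum
  have c1ne : (fun _ : ZMod n => (1 : Fq)) ≠ 0 := by
    intro h
    have := congr_fun h 0
    simp at this
  -- rank-nullity
  have hrn := LinearMap.finrank_range_add_finrank_ker A.mulVecLin
  rw [Module.finrank_fintype_fun_eq_card, ZMod.card] at hrn
  have hrankA : A.rank = Module.finrank Fq (LinearMap.range A.mulVecLin) := rfl
  by_cases hdvd : p ∣ n
  · -- p ∣ n : nullity 2
    have hn0 : (n : Fq) = 0 := (CharP.cast_eq_zero_iff Fq p n).mpr hdvd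
    set ι : ZMod n → Fq := fun i => ZMod.castHom hdvd Fq i with hι
    have hι_add : ∀ i : ZMod n, ι (i + 1) = ι i + 1 := by
      intro i; simp only [hι, map_add, _root_.map_one]
    have hιcast : ∀ k : ℕ, ι (k : ZMod n) = (k : Fq) := by
      intro k; simp only [hι, map_natCast]
    have hkιspan : LinearMap.ker A.mulVecLin
        = Submodule.span Fq {fun _ : ZMod n => (1 : Fq), ι} := by
      apply le_antisymm
      · intro v hv
        obtain ⟨h1, _⟩ := hker_const v hv
        set c := ((P - 1) *ᵥ v) 0 with hc
        have hstep : ∀ i, v (i + 1) = v i + c := by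
          intro i
          have := h1 i
          rw [hfv] at this
          linear_combination this
        have key : ∀ k : ℕ, v (k : ZMod n) = v 0 + c * (k : Fq) := by
          intro k
          induction k with
          | zero => simp
          | succ k ih =>
            push_cast
            rw [hstep, ih]
            ring
        rw [Submodule.mem_span_pair]
        refine ⟨v 0, c, ?_⟩
        funext i
        have h2 := key i.val
        have h3 : ((i.val : ℕ) : ZMod n) = i := by
          simp [ZMod.natCast_val, ZMod.cast_id]
        rw [h3] at h2
        have h4 : ι i = ((i.val : ℕ) : Fq) := by
          rw [← h3, hιcast, h3]
        simp only [Pi.add_apply, Pi.smul_apply, smul_eq_mul]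
        rw [h4, h2]
        ring
      · rw [Submodule.span_le]
        rintro x hx
        simp only [Set.mem_insert_iff, Set.mem_singleton_iff] at hx
        rcases hx with rfl | rfl
        · rw [SetLike.mem_coe, hkerA]
          have : (P - 1) *ᵥ (fun _ : ZMod n => (1 : Fq)) = 0 := by
            funext i; rw [hfv]; simp
          rw [this]
          funext i; rw [hfv]; simp
        · rw [SetLike.mem_coe, hkerA]
          have h5 : (P - 1) *ᵥ ι = fun _ => (1 : Fq) := by
            funext i; rw [hfv, hι_add]; ring
          rw [h5]
          funext i; rw [hfv]; simp
    have hli : LinearIndependent Fq ![fun _ : ZMod n => (1 : Fq), ι] := by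
      rw [LinearIndependent.pair_iff]
      intro a b hab
      have h0 := congr_fun hab 0
      have h1 := congr_fun hab 1
      simp only [Pi.add_apply, Pi.smul_apply, smul_eq_mul, Pi.zero_apply] at h0 h1
      have hι0 : ι (0 : ZMod n) = 0 := by simp only [hι, map_zero]
      have hι1 : ι (1 : ZMod n) = 1 := by simp only [hι, _root_.map_one]
      rw [hι0] at h0
      rw [hι1] at h1
      refine ⟨by linear_combination h0, by linear_combination h1 - h0⟩
    have hfr : Module.finrank Fq (LinearMap.ker A.mulVecLin) = 2 := by
      rw [hkιspan]
      have hrange : Set.range ![fun _ : ZMod n => (1 : Fq), ι]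
          = {fun _ : ZMod n => (1 : Fq), ι} := by
        ext x; simp [Fin.exists_fin_two, or_comm]
      rw [← hrange, finrank_span_eq_card hli]
      simp
    rw [hrank, if_pos hdvd, hrankA]
    omega
  · -- p ∤ n : nullity 1
    have hn0 : (n : Fq) ≠ 0 := fun h => hdvd ((CharP.cast_eq_zero_iff Fq p n).mp h)
    have hker1 : LinearMap.ker A.mulVecLin
        = Submodule.span Fq {fun _ : ZMod n => (1 : Fq)} := by
      apply le_antisymm
      · intro v hv
        obtain ⟨h1, h2⟩ := hker_const v hv
        have hc0 : ((P - 1) *ᵥ v) 0 = 0 := by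
          rcases mul_eq_zero.mp h2 with h | h
          · exact absurd h hn0
          · exact h
        have hstep : ∀ i, v (i + 1) = v i := by
          intro i
          have := h1 i
          rw [hfv, hc0] at this
          exact sub_eq_zero.mp this
        have hv0 : ∀ i, v i = v 0 := hconst v hstep
        rw [Submodule.mem_span_singleton]
        exact ⟨v 0, by funext i; simp [hv0 i]⟩
      · rw [Submodule.span_le]
        rintro x hx
        simp only [Set.mem_singleton_iff] at hx
        subst hx
        rw [SetLike.mem_coe, hkerA]
        have : (P - 1) *ᵥ (fun _ : ZMod n => (1 : Fq)) = 0 := by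
          funext i; rw [hfv]; simp
        rw [this]
        funext i; rw [hfv]; simp
    have hfr : Module.finrank Fq (LinearMap.ker A.mulVecLin) = 1 := by
      rw [hker1]
      exact finrank_span_singleton c1ne
    rw [hrank, if_neg hdvd, hrankA]
    omega
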